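/- For every L > 0, ∫_0^1 (1 − exp(−L u) − L u)/u² du + ∫_1^∞ (1 − exp(−L u))/u² du = L (1 − γ − log L), where γ is the Euler–Mascheroni constant (in particular both integrals converge). -/

import Mathlib

open MeasureTheory Set Filter Topology Real Asymptotics


lemma tendsto_setIntegral_Ioc {f : ℝ → ℝ} (hf : IntegrableOn f (Ioc 0 1)) :
    Tendsto (fun ε => ∫ t in Ioc ε 1, f t) (𝓝[>] (0:ℝ)) (𝓝 (∫ t in Ioc (0:ℝ) 1, f t)) := by
  have hc : AECover (volume.restrict (Ioc (0:ℝ) 1)) (𝓝[>] (0:ℝ)) (fun ε => Ioi ε) := by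
    have h0 : Tendsto (id : ℝ → ℝ) (𝓝[>] (0:ℝ)) (𝓝 0) := tendsto_id.mono_right nhdsWithin_le_nhds
    exact (aecover_Ioi_of_Ioi h0).mono (Measure.restrict_mono Ioc_subset_Ioi_self le_rfl)
  refine (hc.integral_tendsto_of_countably_generated hf).congr' ?_
  filter_upwards [self_mem_nhdsWithin] with ε (hε : 0 < ε)
  rw [Measure.restrict_restrict measurableSet_Ioi]
  have : Ioi ε ∩ Ioc 0 1 = Ioc ε 1 := by
    ext x
    simp only [mem_Ioc, mem_Ioi, mem_inter_iff]
    exact ⟨fun ⟨hx, _, h1⟩ => ⟨hx, h1⟩, fun ⟨hx, h1⟩ => ⟨hx, hε.trans hx, h1⟩⟩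
  rw [this]


lemma exp_neg_ge (x : ℝ) : 1 - x ≤ Real.exp (-x) := by
  have := Real.add_one_le_exp (-x); linarith

lemma exp_neg_le_one {x : ℝ} (hx : 0 ≤ x) : Real.exp (-x) ≤ 1 := by
  rw [← Real.exp_zero]; exact Real.exp_le_exp.2 (by linarith)

lemma abs_exp_neg_sub_one_le {x : ℝ} (hx : 0 ≤ x) : |Real.exp (-x) - 1| ≤ x := by
  rw [abs_le]
  constructor
  · have := exp_neg_ge x; linarith
  · have := Real.exp_pos (-x); have := exp_neg_le_one hx; linarith

lemma exp_neg_quad {x : ℝ} (hx : 0 ≤ x) : |1 - Real.exp (-x) - x| ≤ x ^ 2 / 2 := by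
  have hlow : 0 ≤ Real.exp (-x) - 1 + x := by have := exp_neg_ge x; linarith
  have key : Real.exp (-x) - 1 + x ≤ x ^ 2 / 2 := by
    set f : ℝ → ℝ := fun y => y ^ 2 / 2 - (Real.exp (-y) - 1 + y) with hf
    have hderiv : ∀ y : ℝ, HasDerivAt f (y - 1 + Real.exp (-y)) y := by
      intro y
      have h1 : HasDerivAt (fun y : ℝ => Real.exp (-y)) (-Real.exp (-y)) y := by
        exact ((Real.hasDerivAt_exp (-y)).comp y (hasDerivAt_neg y)).congr_deriv (by ring)
      have h2 : HasDerivAt (fun y : ℝ => y ^ 2 / 2) y y := by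
        simpa using ((hasDerivAt_pow 2 y).div_const 2)
      exact (h2.sub ((h1.sub_const 1).add (hasDerivAt_id y))).congr_deriv (by ring)
    have hmono : Monotone f := by
      refine monotone_of_deriv_nonneg (fun y => (hderiv y).differentiableAt) fun y => ?_
      rw [(hderiv y).deriv]
      have := exp_neg_ge y; linarith
    have h0 : f 0 = 0 := by simp [hf]
    have := hmono hx
    rw [h0] at this
    simp only [hf] at this
    linarith
  rw [abs_le]; constructor <;> nlinarith [sq_nonneg x]

lemma integrableOn_expF_Ioc {L c : ℝ} (hL : 0 < L) (hc : 0 < c) :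
    IntegrableOn (fun t : ℝ => (Real.exp (-(L * t)) - 1) / t) (Ioc 0 c) := by
  have hmeas : AEStronglyMeasurable (fun t : ℝ => (Real.exp (-(L * t)) - 1) / t)
      (volume.restrict (Ioc 0 c)) := by
    refine (ContinuousOn.aestronglyMeasurable ?_ measurableSet_Ioc)
    exact ContinuousOn.div (by fun_prop) continuousOn_id fun x hx => ne_of_gt hx.1
  have hconst : IntegrableOn (fun _ : ℝ => L) (Ioc 0 c) := integrableOn_const (by simp)
  refine hconst.mono' hmeas ?_
  filter_upwards [ae_restrict_mem measurableSet_Ioc] with t ht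
  have ht0 : 0 < t := ht.1
  rw [Real.norm_eq_abs, abs_div, abs_of_pos ht0, div_le_iff₀ ht0]
  exact abs_exp_neg_sub_one_le (by positivity)

lemma integrableOn_expg_Ioi {L a : ℝ} (hL : 0 < L) (ha : 0 < a) :
    IntegrableOn (fun t : ℝ => Real.exp (-(L * t)) / t) (Ioi a) := by
  have hint : IntegrableOn (fun t : ℝ => a⁻¹ * Real.exp (-L * t)) (Ioi a) :=
    (exp_neg_integrableOn_Ioi a hL).const_mul _
  refine hint.mono' ?_ ?_
  · refine (ContinuousOn.aestronglyMeasurable ?_ measurableSet_Ioi)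
    exact ContinuousOn.div (by fun_prop) continuousOn_id fun x hx => ne_of_gt (ha.trans hx)
  · filter_upwards [ae_restrict_mem measurableSet_Ioi] with t ht
    have ht0 : 0 < t := ha.trans ht
    rw [Real.norm_eq_abs, abs_div, abs_of_pos ht0, abs_of_pos (Real.exp_pos _), neg_mul]
    rw [div_le_iff₀ ht0, mul_comm a⁻¹, mul_assoc]
    refine le_mul_of_one_le_right (Real.exp_pos _).le ?_
    rw [← div_eq_inv_mul, le_div_iff₀ ha]
    linarith [le_of_lt (mem_Ioi.mp ht)]

lemma integrableOn_main1 {L : ℝ} (hL : 0 < L) :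
    IntegrableOn (fun u : ℝ => (1 - Real.exp (-L * u) - L * u) / u ^ 2) (Ioc 0 1) := by
  have hmeas : AEStronglyMeasurable (fun u : ℝ => (1 - Real.exp (-L * u) - L * u) / u ^ 2)
      (volume.restrict (Ioc (0:ℝ) 1)) := by
    refine (ContinuousOn.aestronglyMeasurable ?_ measurableSet_Ioc)
    exact ContinuousOn.div (by fun_prop) (by fun_prop) fun x hx => ne_of_gt (pow_pos hx.1 2)
  have hconst : IntegrableOn (fun _ : ℝ => L ^ 2 / 2) (Ioc (0:ℝ) 1) :=
    integrableOn_const (by simp)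
  refine hconst.mono' hmeas ?_
  filter_upwards [ae_restrict_mem measurableSet_Ioc] with t ht
  have ht0 : 0 < t := ht.1
  rw [Real.norm_eq_abs, abs_div, abs_of_pos (pow_pos ht0 2), div_le_iff₀ (pow_pos ht0 2)]
  have : |1 - Real.exp (-L * t) - L * t| ≤ (L * t) ^ 2 / 2 := by
    rw [show -L * t = -(L * t) by ring]
    exact exp_neg_quad (by positivity)
  calc |1 - Real.exp (-L * t) - L * t| ≤ (L * t) ^ 2 / 2 := this
    _ ≤ L ^ 2 / 2 * t ^ 2 := by nlinarith [sq_nonneg (L*t), ht.2, ht0.le]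

lemma integrableOn_main2 {L : ℝ} (hL : 0 < L) :
    IntegrableOn (fun u : ℝ => (1 - Real.exp (-L * u)) / u ^ 2) (Ioi 1) := by
  have hint : IntegrableOn (fun t : ℝ => t ^ (-2 : ℝ)) (Ioi (1:ℝ)) :=
    integrableOn_Ioi_rpow_of_lt (by norm_num) one_pos
  refine hint.mono' ?_ ?_
  · refine (ContinuousOn.aestronglyMeasurable ?_ measurableSet_Ioi)
    exact ContinuousOn.div (by fun_prop) (by fun_prop) fun x hx => by
      have : (0:ℝ) < x := one_pos.trans hx; positivity
  · filter_upwards [ae_restrict_mem measurableSet_Ioi] with t ht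
    have ht0 : 0 < t := one_pos.trans ht
    have h1 : |1 - Real.exp (-L * t)| ≤ 1 := by
      rw [abs_le]
      have h2 : Real.exp (-L * t) ≤ 1 := by
        rw [show -L * t = -(L * t) by ring]; exact exp_neg_le_one (by positivity)
      have := Real.exp_pos (-L * t)
      constructor <;> linarith
    have ht2 : t ^ (-2:ℝ) = (t ^ 2)⁻¹ := by
      rw [Real.rpow_neg ht0.le, show (2:ℝ) = ((2:ℕ):ℝ) by norm_num, Real.rpow_natCast]
    rw [Real.norm_eq_abs, abs_div, abs_of_pos (pow_pos ht0 2), ht2,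
      div_le_iff₀ (pow_pos ht0 2), inv_mul_cancel₀ (ne_of_gt (pow_pos ht0 2))]
    exact h1


lemma hasDerivAt_RealGamma_integral :
    HasDerivAt Real.Gamma (∫ t in Ioi (0:ℝ), Real.log t * Real.exp (-t)) 1 := by
  have h1 : HasDerivAt Complex.GammaIntegral
      (∫ t : ℝ in Ioi 0, (t:ℂ) ^ ((1:ℂ) - 1) * (Real.log t * Real.exp (-t))) 1 :=
    Complex.hasDerivAt_GammaIntegral (by norm_num)
  have hint : (∫ t : ℝ in Ioi 0, (t:ℂ) ^ ((1:ℂ) - 1) * (Real.log t * Real.exp (-t)))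
      = ((∫ t in Ioi (0:ℝ), Real.log t * Real.exp (-t) : ℝ) : ℂ) := by
    rw [show (∫ t : ℝ in Ioi 0, (t:ℂ) ^ ((1:ℂ) - 1) * (Real.log t * Real.exp (-t)))
        = ∫ t in Ioi (0:ℝ), ((Real.log t * Real.exp (-t) : ℝ) : ℂ) from
      setIntegral_congr_fun measurableSet_Ioi fun t ht => by
        rw [sub_self, Complex.cpow_zero, one_mul]; push_cast; ring]
    exact integral_ofReal
  rw [hint] at h1
  have h2 : HasDerivAt Complex.Gamma
      ((∫ t in Ioi (0:ℝ), Real.log t * Real.exp (-t) : ℝ) : ℂ) 1 := by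
    refine h1.congr_of_eventuallyEq ?_
    have hopen : IsOpen {s : ℂ | 0 < s.re} := isOpen_lt continuous_const Complex.continuous_re
    filter_upwards [hopen.mem_nhds (by norm_num : (0:ℝ) < (1:ℂ).re)] with s hs
    exact Complex.Gamma_eq_integral hs
  have h3 := h2.real_of_complex
  simp only [Complex.ofReal_re] at h3
  refine h3.congr_of_eventuallyEq ?_
  filter_upwards with x
  rw [Complex.Gamma_ofReal, Complex.ofReal_re]

lemma integral_log_mul_exp_neg :
    (∫ t in Ioi (0:ℝ), Real.log t * Real.exp (-t)) = -Real.eulerMascheroniConstant :=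
  hasDerivAt_RealGamma_integral.unique Real.hasDerivAt_Gamma_one


lemma integrableOn_log_mul_exp_neg :
    IntegrableOn (fun t : ℝ => Real.log t * Real.exp (-t)) (Ioi 0) := by
  have h := (mellin_hasDerivAt_of_isBigO_rpow (E := ℂ) (s := 1) (a := 2) (b := 0)
      (f := fun t : ℝ => (Real.exp (-t) : ℂ))
      ?_ ?_ (by norm_num) ?_ (by norm_num)).1
  · have h' : IntegrableOn (fun t : ℝ => ((Real.log t * Real.exp (-t) : ℝ) : ℂ)) (Ioi 0) := by
      refine h.congr_fun (fun t ht => ?_) measurableSet_Ioi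
      simp only [smul_eq_mul]
      rw [sub_self, Complex.cpow_zero, one_mul, Complex.real_smul]
      push_cast; ring
    have h2 := h'.re
    refine h2.congr (Eventually.of_forall fun t => ?_)
    exact RCLike.ofReal_re _
  · exact (Continuous.continuousOn (by continuity)).locallyIntegrableOn measurableSet_Ioi
  · rw [← isBigO_norm_left]
    simp_rw [Complex.norm_real, isBigO_norm_left]
    simpa only [neg_one_mul] using (isLittleO_exp_neg_mul_rpow_atTop zero_lt_one _).isBigO
  · simp_rw [neg_zero, Real.rpow_zero]
    refine isBigO_const_of_tendsto (?_ : Tendsto _ _ (𝓝 (1 : ℂ))) one_ne_zero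
    rw [(by simp : (1 : ℂ) = Real.exp (-0))]
    exact (Complex.continuous_ofReal.comp (Real.continuous_exp.comp continuous_neg)).continuousWithinAt


lemma partA : (∫ t in Ioc (0:ℝ) 1, Real.log t * Real.exp (-t))
    = ∫ t in Ioc (0:ℝ) 1, (Real.exp (-t) - 1) / t := by
  have hInt1 : IntegrableOn (fun t : ℝ => Real.log t * Real.exp (-t)) (Ioc 0 1) :=
    integrableOn_log_mul_exp_neg.mono_set Ioc_subset_Ioi_self
  have hIntF : IntegrableOn (fun t : ℝ => (Real.exp (-t) - 1) / t) (Ioc 0 1) := by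
    have := integrableOn_expF_Ioc (L := 1) (c := 1) one_pos one_pos
    simpa using this
  have T1 := tendsto_setIntegral_Ioc hInt1
  have T2 := tendsto_setIntegral_Ioc hIntF
  -- boundary term tends to 0
  have B : Tendsto (fun ε : ℝ => Real.log ε * (1 - Real.exp (-ε))) (𝓝[>] (0:ℝ)) (𝓝 0) := by
    have h1 : Tendsto (fun x : ℝ => Real.log x * x ^ (1:ℝ)) (𝓝[>] (0:ℝ)) (𝓝 0) :=
      tendsto_log_mul_rpow_nhdsGT_zero one_pos
    have h2 : Tendsto (fun x : ℝ => |Real.log x * x ^ (1:ℝ)|) (𝓝[>] (0:ℝ)) (𝓝 0) := by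
      simpa using h1.abs
    refine squeeze_zero_norm' ?_ h2
    filter_upwards [self_mem_nhdsWithin] with ε (hε : 0 < ε)
    rw [Real.rpow_one, Real.norm_eq_abs, abs_mul, abs_mul]
    refine mul_le_mul_of_nonneg_left ?_ (abs_nonneg _)
    rw [abs_sub_comm]
    calc |Real.exp (-ε) - 1| ≤ ε := abs_exp_neg_sub_one_le hε.le
      _ ≤ |ε| := le_abs_self ε
  -- the IBP identity for each ε ∈ (0,1)
  have hEq : ∀ᶠ ε in 𝓝[>] (0:ℝ), (∫ t in Ioc ε 1, Real.log t * Real.exp (-t))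
      = -(Real.log ε * (1 - Real.exp (-ε))) + ∫ t in Ioc ε 1, (Real.exp (-t) - 1) / t := by
    filter_upwards [Ioo_mem_nhdsGT_of_mem (left_mem_Ico.2 one_pos)] with ε hε
    obtain ⟨hε0, hε1⟩ := hε
    have huIcc : ∀ x ∈ uIcc ε 1, 0 < x := by
      intro x hx
      rw [uIcc_of_le hε1.le] at hx
      exact lt_of_lt_of_le hε0 hx.1
    have hibp := intervalIntegral.integral_mul_deriv_eq_deriv_mul
      (u := Real.log) (u' := fun x => x⁻¹)
      (v := fun t => 1 - Real.exp (-t)) (v' := fun t => Real.exp (-t))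
      (fun x hx => Real.hasDerivAt_log (huIcc x hx).ne')
      (fun x _ => by
        have h := (Real.hasDerivAt_exp (-x)).comp x (hasDerivAt_neg x)
        simpa using (h.const_sub 1).congr_deriv (by simp [mul_comm]))
      ((ContinuousOn.intervalIntegrable (fun x hx => (continuousAt_inv₀ (huIcc x hx).ne').continuousWithinAt)))
      ((Real.continuous_exp.comp continuous_neg).intervalIntegrable _ _)
    rw [← intervalIntegral.integral_of_le hε1.le, ← intervalIntegral.integral_of_le hε1.le, hibp]
    have : (∫ x in ε..1, x⁻¹ * (1 - Real.exp (-x))) = ∫ x in ε..1, -((Real.exp (-x) - 1) / x) := by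
      refine intervalIntegral.integral_congr fun x hx => ?_
      have hx0 := (huIcc x hx).ne'
      field_simp
      ring
    rw [this, intervalIntegral.integral_neg]
    simp
  exact tendsto_nhds_unique (T1.congr' hEq) (by simpa using B.neg.add T2)

lemma partB : (∫ t in Ioi (1:ℝ), Real.log t * Real.exp (-t))
    = ∫ t in Ioi (1:ℝ), Real.exp (-t) / t := by
  have hInt1 : IntegrableOn (fun t : ℝ => Real.log t * Real.exp (-t)) (Ioi 1) :=
    integrableOn_log_mul_exp_neg.mono_set (Ioi_subset_Ioi zero_le_one)
  have hIntg : IntegrableOn (fun t : ℝ => Real.exp (-t) / t) (Ioi 1) := by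
    have := integrableOn_expg_Ioi (L := 1) (a := 1) one_pos one_pos
    simpa using this
  have T1 := intervalIntegral_tendsto_integral_Ioi 1 hInt1 (tendsto_id (x := atTop))
  have T2 := intervalIntegral_tendsto_integral_Ioi 1 hIntg (tendsto_id (x := atTop))
  have B : Tendsto (fun M : ℝ => -(Real.exp (-M)) * Real.log M) atTop (𝓝 0) := by
    have h1 : Tendsto (fun M : ℝ => M ^ 1 * Real.exp (-M)) atTop (𝓝 0) :=
      Real.tendsto_pow_mul_exp_neg_atTop_nhds_zero 1
    refine squeeze_zero_norm' ?_ (by simpa using h1.abs)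
    filter_upwards [eventually_ge_atTop (1:ℝ)] with M hM
    have hlog : Real.log M ≤ M := (Real.log_le_sub_one_of_pos (by linarith)).trans (by linarith)
    calc ‖-Real.exp (-M) * Real.log M‖ = Real.exp (-M) * |Real.log M| := by
          rw [Real.norm_eq_abs, abs_mul, abs_neg, abs_of_pos (Real.exp_pos _)]
      _ ≤ Real.exp (-M) * M := by
          refine mul_le_mul_of_nonneg_left ?_ (Real.exp_pos _).le
          rw [abs_of_nonneg (Real.log_nonneg hM)]; exact hlog
      _ = |M * Real.exp (-M)| := by
          rw [abs_of_nonneg (by positivity : (0:ℝ) ≤ M * Real.exp (-M)), mul_comm]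
      _ = |M| * Real.exp (-M) := by rw [abs_mul, abs_of_pos (Real.exp_pos _)]
  have hEq : ∀ᶠ M in atTop, (∫ t in (1:ℝ)..M, Real.log t * Real.exp (-t))
      = -(Real.exp (-M)) * Real.log M + ∫ t in (1:ℝ)..M, Real.exp (-t) / t := by
    filter_upwards [eventually_ge_atTop (1:ℝ)] with M hM
    have huIcc : ∀ x ∈ uIcc (1:ℝ) M, 0 < x := by
      intro x hx
      rw [uIcc_of_le hM] at hx
      exact lt_of_lt_of_le one_pos hx.1
    have hibp := intervalIntegral.integral_mul_deriv_eq_deriv_mul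
      (u := Real.log) (u' := fun x => x⁻¹)
      (v := fun t => -Real.exp (-t)) (v' := fun t => Real.exp (-t))
      (fun x hx => Real.hasDerivAt_log (huIcc x hx).ne')
      (fun x _ => by
        have h := (Real.hasDerivAt_exp (-x)).comp x (hasDerivAt_neg x)
        exact h.neg.congr_deriv (by simp [mul_comm]))
      ((ContinuousOn.intervalIntegrable (fun x hx => (continuousAt_inv₀ (huIcc x hx).ne').continuousWithinAt)))
      ((Real.continuous_exp.comp continuous_neg).intervalIntegrable _ _)
    rw [hibp]
    have : (∫ x in (1:ℝ)..M, x⁻¹ * -Real.exp (-x)) = ∫ x in (1:ℝ)..M, -(Real.exp (-x) / x) := by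
      refine intervalIntegral.integral_congr fun x hx => ?_
      field_simp
    rw [this, intervalIntegral.integral_neg]
    simp
    ring
  exact tendsto_nhds_unique (T1.congr' hEq) (by simpa using B.add T2)


lemma partC {L : ℝ} (hL : 0 < L) :
    (∫ u in Ioc (0:ℝ) 1, (1 - Real.exp (-L * u) - L * u) / u ^ 2)
      = (Real.exp (-L) + L - 1) + L * ∫ t in Ioc (0:ℝ) 1, (Real.exp (-(L * t)) - 1) / t := by
  have T1 := tendsto_setIntegral_Ioc (integrableOn_main1 hL)
  have T2 := tendsto_setIntegral_Ioc (integrableOn_expF_Ioc hL one_pos)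
  have B : Tendsto (fun ε : ℝ => (1 - Real.exp (-L * ε) - L * ε) / ε) (𝓝[>] (0:ℝ)) (𝓝 0) := by
    have h1 : Tendsto (fun ε : ℝ => L ^ 2 / 2 * ε) (𝓝[>] (0:ℝ)) (𝓝 0) := by
      have := (tendsto_id (x := 𝓝[>] (0:ℝ))).mono_right (nhdsWithin_le_nhds)
      simpa using (this.const_mul (L ^ 2 / 2))
    refine squeeze_zero_norm' ?_ h1
    filter_upwards [self_mem_nhdsWithin] with ε (hε : 0 < ε)
    rw [Real.norm_eq_abs, abs_div, abs_of_pos hε, div_le_iff₀ hε]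
    calc |1 - Real.exp (-L * ε) - L * ε| ≤ (L * ε) ^ 2 / 2 := by
          rw [show -L * ε = -(L * ε) by ring]; exact exp_neg_quad (by positivity)
      _ ≤ L ^ 2 / 2 * ε * ε := by nlinarith [hε.le]
  have hEq : ∀ᶠ ε in 𝓝[>] (0:ℝ), (∫ u in Ioc ε 1, (1 - Real.exp (-L * u) - L * u) / u ^ 2)
      = ((Real.exp (-L) + L - 1) + (1 - Real.exp (-L * ε) - L * ε) / ε)
        + L * ∫ t in Ioc ε 1, (Real.exp (-(L * t)) - 1) / t := by
    filter_upwards [Ioo_mem_nhdsGT_of_mem (left_mem_Ico.2 one_pos)] with ε hε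
    obtain ⟨hε0, hε1⟩ := hε
    have huIcc : ∀ x ∈ uIcc ε 1, 0 < x := by
      intro x hx
      rw [uIcc_of_le hε1.le] at hx
      exact lt_of_lt_of_le hε0 hx.1
    have hibp := intervalIntegral.integral_mul_deriv_eq_deriv_mul
      (u := fun t => 1 - Real.exp (-L * t) - L * t) (u' := fun t => L * Real.exp (-L * t) - L)
      (v := fun t => -t⁻¹) (v' := fun t => (t ^ 2)⁻¹)
      (fun x _ => by
        have h : HasDerivAt (fun t : ℝ => Real.exp (-L * t)) (-L * Real.exp (-L * x)) x := by
          have := ((hasDerivAt_id x).const_mul (-L)).exp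
          simpa [mul_comm] using this
        have h2 := ((h.const_sub 1).sub ((hasDerivAt_id x).const_mul L))
        exact h2.congr_deriv (by ring)
      )
      (fun x hx => by
        have := (hasDerivAt_inv (huIcc x hx).ne').neg
        exact this.congr_deriv (by simp))
      (ContinuousOn.intervalIntegrable (by
        apply Continuous.continuousOn; fun_prop))
      (ContinuousOn.intervalIntegrable
        (ContinuousOn.inv₀ (continuousOn_pow 2) fun x hx => ne_of_gt (pow_pos (huIcc x hx) 2)))
    rw [← intervalIntegral.integral_of_le hε1.le, ← intervalIntegral.integral_of_le hε1.le]
    have hrw1 : (∫ u in ε..1, (1 - Real.exp (-L * u) - L * u) / u ^ 2)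
        = ∫ u in ε..1, (1 - Real.exp (-L * u) - L * u) * (u ^ 2)⁻¹ := by
      refine intervalIntegral.integral_congr fun x hx => ?_
      rw [div_eq_mul_inv]
    have hrw2 : (∫ x in ε..1, (L * Real.exp (-L * x) - L) * -x⁻¹)
        = ∫ x in ε..1, -(L * ((Real.exp (-(L * x)) - 1) / x)) := by
      refine intervalIntegral.integral_congr fun x hx => ?_
      have hx0 := (huIcc x hx).ne'
      rw [show -(L * x) = -L * x by ring]
      field_simp
    rw [hrw1, hibp, hrw2, intervalIntegral.integral_neg, intervalIntegral.integral_const_mul,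
      sub_neg_eq_add]
    ring_nf
  have Tr : Tendsto (fun ε : ℝ => ((Real.exp (-L) + L - 1) + (1 - Real.exp (-L * ε) - L * ε) / ε)
      + L * ∫ t in Ioc ε 1, (Real.exp (-(L * t)) - 1) / t) (𝓝[>] (0:ℝ))
      (𝓝 (((Real.exp (-L) + L - 1) + 0) + L * ∫ t in Ioc (0:ℝ) 1, (Real.exp (-(L * t)) - 1) / t)) :=
    ((tendsto_const_nhds.add B).add (T2.const_mul L))
  rw [add_zero] at Tr
  exact tendsto_nhds_unique (T1.congr' hEq) Tr

lemma partD {L : ℝ} (hL : 0 < L) :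
    (∫ u in Ioi (1:ℝ), (1 - Real.exp (-L * u)) / u ^ 2)
      = (1 - Real.exp (-L)) + L * ∫ t in Ioi (1:ℝ), Real.exp (-(L * t)) / t := by
  have T1 := intervalIntegral_tendsto_integral_Ioi 1 (integrableOn_main2 hL) (tendsto_id (x := atTop))
  have T2 := intervalIntegral_tendsto_integral_Ioi 1 (integrableOn_expg_Ioi hL one_pos)
    (tendsto_id (x := atTop))
  have B : Tendsto (fun M : ℝ => -((1 - Real.exp (-L * M)) / M)) atTop (𝓝 0) := by
    have h1 : Tendsto (fun M : ℝ => M⁻¹) atTop (𝓝 0) := tendsto_inv_atTop_zero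
    refine squeeze_zero_norm' ?_ (by simpa using h1.abs)
    filter_upwards [eventually_ge_atTop (1:ℝ)] with M hM
    have hM0 : (0:ℝ) < M := by linarith
    have h2 : Real.exp (-L * M) ≤ 1 := by
      rw [show -L * M = -(L * M) by ring]; exact exp_neg_le_one (by positivity)
    have h3 := (Real.exp_pos (-L * M)).le
    rw [Real.norm_eq_abs, abs_neg, abs_div, abs_of_pos hM0, div_le_iff₀ hM0,
      inv_mul_cancel₀ hM0.ne', abs_le]
    constructor <;> linarith
  have hEq : ∀ᶠ M in atTop, (∫ u in (1:ℝ)..M, (1 - Real.exp (-L * u)) / u ^ 2)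
      = ((1 - Real.exp (-L)) + -((1 - Real.exp (-L * M)) / M))
        + L * ∫ t in (1:ℝ)..M, Real.exp (-(L * t)) / t := by
    filter_upwards [eventually_ge_atTop (1:ℝ)] with M hM
    have huIcc : ∀ x ∈ uIcc (1:ℝ) M, 0 < x := by
      intro x hx
      rw [uIcc_of_le hM] at hx
      exact lt_of_lt_of_le one_pos hx.1
    have hibp := intervalIntegral.integral_mul_deriv_eq_deriv_mul
      (u := fun t => 1 - Real.exp (-L * t)) (u' := fun t => L * Real.exp (-L * t))
      (v := fun t => -t⁻¹) (v' := fun t => (t ^ 2)⁻¹)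
      (fun x _ => by
        have h : HasDerivAt (fun t : ℝ => Real.exp (-L * t)) (-L * Real.exp (-L * x)) x := by
          have := ((hasDerivAt_id x).const_mul (-L)).exp
          simpa [mul_comm] using this
        exact (h.const_sub 1).congr_deriv (by ring))
      (fun x hx => by
        have := (hasDerivAt_inv (huIcc x hx).ne').neg
        exact this.congr_deriv (by simp))
      (ContinuousOn.intervalIntegrable (by
        apply Continuous.continuousOn; fun_prop))
      (ContinuousOn.intervalIntegrable
        (ContinuousOn.inv₀ (continuousOn_pow 2) fun x hx => ne_of_gt (pow_pos (huIcc x hx) 2)))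
    have hrw1 : (∫ u in (1:ℝ)..M, (1 - Real.exp (-L * u)) / u ^ 2)
        = ∫ u in (1:ℝ)..M, (1 - Real.exp (-L * u)) * (u ^ 2)⁻¹ := by
      refine intervalIntegral.integral_congr fun x hx => ?_
      rw [div_eq_mul_inv]
    have hrw2 : (∫ x in (1:ℝ)..M, (L * Real.exp (-L * x)) * -x⁻¹)
        = ∫ x in (1:ℝ)..M, -(L * (Real.exp (-(L * x)) / x)) := by
      refine intervalIntegral.integral_congr fun x hx => ?_
      have hx0 := (huIcc x hx).ne'
      rw [show -(L * x) = -L * x by ring]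
      field_simp
    rw [hrw1, hibp, hrw2, intervalIntegral.integral_neg, intervalIntegral.integral_const_mul,
      sub_neg_eq_add]
    ring_nf
  have Tr : Tendsto (fun M : ℝ => ((1 - Real.exp (-L)) + -((1 - Real.exp (-L * M)) / M))
      + L * ∫ t in (1:ℝ)..M, Real.exp (-(L * t)) / t) atTop
      (𝓝 (((1 - Real.exp (-L)) + 0) + L * ∫ t in Ioi (1:ℝ), Real.exp (-(L * t)) / t)) :=
    (tendsto_const_nhds.add B).add (T2.const_mul L)
  rw [add_zero] at Tr
  exact tendsto_nhds_unique (T1.congr' hEq) Tr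


noncomputable def Ff : ℝ → ℝ := fun s => (Real.exp (-s) - 1) / s
noncomputable def Gg : ℝ → ℝ := fun s => Real.exp (-s) / s

lemma intFf {c : ℝ} (hc : 0 < c) : IntegrableOn Ff (Ioc 0 c) := by
  unfold Ff
  simpa [Ff, one_mul] using (integrableOn_expF_Ioc (L := 1) one_pos hc)

lemma intGg {a : ℝ} (ha : 0 < a) : IntegrableOn Gg (Ioi a) := by
  unfold Gg
  simpa [Gg, one_mul] using (integrableOn_expg_Ioi (L := 1) one_pos ha)

lemma integral_Ioi_split {g : ℝ → ℝ} {a b : ℝ} (hab : a ≤ b) (hg : IntegrableOn g (Ioi a)) :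
    (∫ t in Ioi a, g t) = (∫ t in Ioc a b, g t) + ∫ t in Ioi b, g t := by
  rw [← Ioc_union_Ioi_eq_Ioi hab]
  rw [setIntegral_union (Ioc_disjoint_Ioi le_rfl) measurableSet_Ioi
    (hg.mono_set Ioc_subset_Ioi_self)
    (hg.mono_set (Ioi_subset_Ioi hab))]

lemma base_gamma : (∫ t in Ioc (0:ℝ) 1, Ff t) + (∫ t in Ioi (1:ℝ), Gg t)
    = -Real.eulerMascheroniConstant := by
  have hsplit := integral_Ioi_split zero_le_one integrableOn_log_mul_exp_neg
  rw [partA, partB] at hsplit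
  rw [← integral_log_mul_exp_neg, hsplit]
  rfl

lemma Phi_eq {L : ℝ} (hL : 0 < L) :
    (∫ t in Ioc (0:ℝ) L, Ff t) + (∫ t in Ioi L, Gg t)
      = -Real.eulerMascheroniConstant - Real.log L := by
  have hFF : ∀ c : ℝ, 0 < c → IntervalIntegrable Ff volume 0 c := fun c hc => by
    rw [intervalIntegrable_iff_integrableOn_Ioc_of_le hc.le]; exact intFf hc
  have d1 : (∫ t in Ioc (0:ℝ) L, Ff t) - (∫ t in Ioc (0:ℝ) 1, Ff t) = ∫ t in (1:ℝ)..L, Ff t := by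
    rw [← intervalIntegral.integral_of_le hL.le, ← intervalIntegral.integral_of_le zero_le_one]
    exact intervalIntegral.integral_interval_sub_left (hFF L hL) (hFF 1 one_pos)
  have d2 : (∫ t in Ioi (1:ℝ), Gg t) - (∫ t in Ioi L, Gg t) = ∫ t in (1:ℝ)..L, Gg t := by
    rcases le_total 1 L with h | h
    · have := integral_Ioi_split h (intGg one_pos)
      rw [this, ← intervalIntegral.integral_of_le h]
      ring
    · have := integral_Ioi_split h (intGg hL)
      rw [this, intervalIntegral.integral_symm, ← intervalIntegral.integral_of_le h]
      ring
  have hcont : ∀ x ∈ uIcc (1:ℝ) L, 0 < x := by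
    intro x hx
    rcases le_total 1 L with h | h
    · rw [uIcc_of_le h] at hx; linarith [hx.1]
    · rw [uIcc_of_ge h] at hx; linarith [hx.1, hL]
  have hFi : IntervalIntegrable Ff volume 1 L := ContinuousOn.intervalIntegrable <| by
    refine ContinuousOn.div (by fun_prop) continuousOn_id fun x hx => (hcont x hx).ne'
  have hGi : IntervalIntegrable Gg volume 1 L := ContinuousOn.intervalIntegrable <| by
    refine ContinuousOn.div (by fun_prop) continuousOn_id fun x hx => (hcont x hx).ne'
  have d3 : (∫ t in (1:ℝ)..L, Ff t) - (∫ t in (1:ℝ)..L, Gg t) = -Real.log L := by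
    rw [← intervalIntegral.integral_sub hFi hGi]
    have : (∫ t in (1:ℝ)..L, Ff t - Gg t) = ∫ t in (1:ℝ)..L, -t⁻¹ := by
      refine intervalIntegral.integral_congr fun x hx => ?_
      have hx0 := (hcont x hx).ne'
      simp only [Ff, Gg]
      field_simp
      ring
    rw [this, intervalIntegral.integral_neg, integral_inv (fun h =>
      absurd rfl (hcont 0 h).ne'), div_one]
  have := base_gamma
  linarith

lemma sub1 {L : ℝ} (hL : 0 < L) :
    (∫ t in Ioc (0:ℝ) 1, (Real.exp (-(L * t)) - 1) / t) = ∫ s in Ioc (0:ℝ) L, Ff s := by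
  rw [← intervalIntegral.integral_of_le zero_le_one, ← intervalIntegral.integral_of_le hL.le]
  have h1 : (∫ t in (0:ℝ)..1, (Real.exp (-(L * t)) - 1) / t)
      = ∫ t in (0:ℝ)..1, L * Ff (L * t) := by
    refine intervalIntegral.integral_congr fun x hx => ?_
    rcases eq_or_ne x 0 with rfl | hx0
    · simp [Ff]
    · simp only [Ff]
      field_simp
  rw [h1, intervalIntegral.integral_const_mul, ← smul_eq_mul,
    intervalIntegral.smul_integral_comp_mul_left Ff L, mul_zero, mul_one]

lemma sub2 {L : ℝ} (hL : 0 < L) :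
    (∫ t in Ioi (1:ℝ), Real.exp (-(L * t)) / t) = ∫ s in Ioi L, Gg s := by
  have h1 : (∫ t in Ioi (1:ℝ), Real.exp (-(L * t)) / t) = ∫ t in Ioi (1:ℝ), L * Gg (L * t) := by
    refine setIntegral_congr_fun measurableSet_Ioi fun x hx => ?_
    have hx0 : (0:ℝ) < x := lt_trans one_pos hx
    simp only [Gg]
    field_simp
  rw [h1, MeasureTheory.integral_const_mul, integral_comp_mul_left_Ioi Gg 1 hL, mul_one, smul_eq_mul,
    ← mul_assoc, mul_inv_cancel₀ hL.ne', one_mul]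

theorem stmt_8 (L : ℝ) (hL : 0 < L) :
    IntegrableOn (fun u : ℝ => (1 - Real.exp (-L * u) - L * u) / u ^ 2)
        (Set.Ioc (0 : ℝ) 1) volume ∧
    IntegrableOn (fun u : ℝ => (1 - Real.exp (-L * u)) / u ^ 2)
        (Set.Ioi (1 : ℝ)) volume ∧
    (∫ u in Set.Ioc (0 : ℝ) 1, (1 - Real.exp (-L * u) - L * u) / u ^ 2)
        + ∫ u in Set.Ioi (1 : ℝ), (1 - Real.exp (-L * u)) / u ^ 2
      = L * (1 - Real.eulerMascheroniConstant - Real.log L) := by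
  refine ⟨integrableOn_main1 hL, integrableOn_main2 hL, ?_⟩
  rw [partC hL, partD hL, sub1 hL, sub2 hL]
  have hphi := Phi_eq hL
  nlinarith [hphi]
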